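/- The collection of (l^0)-sets, i.e., sets A ⊆ ω^ω such that every Laver tree T has a Laver subtree Q ⊆ T with [Q] ∩ A = ∅, forms a σ-ideal on the Baire space. -/

import Mathlib

/-- A tree: a set of finite sequences closed under initial segments. -/
def IsTree {α : Type*} (T : Set (List α)) : Prop :=
  ∀ t ∈ T, ∀ n, t.take n ∈ T

/-- The body `[T]` of a tree. -/
def body {α : Type*} (T : Set (List α)) : Set (ℕ → α) :=
  {x | ∀ n, List.ofFn (fun i : Fin n => x i) ∈ T}

/-- A Laver tree: a tree on `ω` with a stem (a node comparable with all nodes of the tree)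
such that every node extending the stem has infinitely many immediate successors. -/
def LaverTree (T : Set (List ℕ)) : Prop :=
  IsTree T ∧ ∃ s ∈ T, (∀ t ∈ T, t <+: s ∨ s <+: t) ∧
    ∀ t ∈ T, s <+: t → {n : ℕ | t ++ [n] ∈ T}.Infinite

/-- `A` is an `(l⁰)`-set: every Laver tree has a Laver subtree whose body misses `A`. -/
def L0 (A : Set (ℕ → ℕ)) : Prop :=
  ∀ T, LaverTree T → ∃ Q ⊆ T, LaverTree Q ∧ body Q ∩ A = ∅


/-- Laver tree with a specified stem witness. -/
def LaverS (T : Set (List ℕ)) (s : List ℕ) : Prop :=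
  IsTree T ∧ s ∈ T ∧ (∀ t ∈ T, t <+: s ∨ s <+: t) ∧
    ∀ t ∈ T, s <+: t → {n : ℕ | t ++ [n] ∈ T}.Infinite

lemma laverTree_iff {T : Set (List ℕ)} : LaverTree T ↔ ∃ s, LaverS T s := by
  constructor
  · rintro ⟨h1, s, h2, h3, h4⟩; exact ⟨s, h1, h2, h3, h4⟩
  · rintro ⟨s, h1, h2, h3, h4⟩; exact ⟨h1, s, h2, h3, h4⟩

/-- `x` restricted to its first `n` values, as a list. -/
def seg (x : ℕ → ℕ) (n : ℕ) : List ℕ := List.ofFn (fun i : Fin n => x i)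

lemma seg_length (x : ℕ → ℕ) (n : ℕ) : (seg x n).length = n := by simp [seg]

lemma seg_succ (x : ℕ → ℕ) (n : ℕ) : seg x (n + 1) = seg x n ++ [x n] := by
  rw [seg, List.ofFn_succ', List.concat_eq_append]
  simp [seg]

lemma seg_prefix (x : ℕ → ℕ) {m n : ℕ} (h : m ≤ n) : seg x m <+: seg x n := by
  induction n with
  | zero => interval_cases m; exact List.prefix_refl _
  | succ n ih =>
    rcases Nat.lt_or_ge m (n+1) with h' | h'
    · exact (ih (by omega)).trans (by rw [seg_succ]; exact List.prefix_append _ _)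
    · have : m = n + 1 := by omega
      subst this; exact List.prefix_refl _

lemma seg_take (x : ℕ → ℕ) {m n : ℕ} (h : m ≤ n) : (seg x n).take m = seg x m := by
  have := List.prefix_iff_eq_take.mp (seg_prefix x h)
  rw [seg_length] at this; exact this.symm

lemma mem_body {T : Set (List ℕ)} {x : ℕ → ℕ} : x ∈ body T ↔ ∀ n, seg x n ∈ T := Iff.rfl

lemma take_comparable {u t : List ℕ} (h : t <+: u) (k : ℕ) :
    u.take k <+: t ∨ t <+: u.take k := by
  rcases le_or_gt k t.length with hk | hk
  · left
    have ht : t = u.take t.length := List.prefix_iff_eq_take.mp h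
    have : u.take k = (u.take t.length).take k := by rw [List.take_take, Nat.min_eq_left hk]
    rw [this, ← ht]; exact List.take_prefix _ _
  · right
    have ht : t = u.take t.length := List.prefix_iff_eq_take.mp h
    have : t = (u.take k).take t.length := by
      rw [List.take_take, Nat.min_eq_left (by omega)]; exact ht
    rw [this]; exact List.take_prefix _ _

lemma prefix_of_prefix_length_le {w u : List ℕ} {n : ℕ} (h : w <+: u ++ [n])
    (hl : w.length ≤ u.length) : w <+: u := by
  have := List.prefix_iff_eq_take.mp h
  rw [List.take_append_of_le_length hl] at this
  rw [this]; exact List.take_prefix _ _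

/-- Localization of a tree at a node. -/
def Loc (T : Set (List ℕ)) (t : List ℕ) : Set (List ℕ) := {u ∈ T | u <+: t ∨ t <+: u}

lemma loc_subset (T : Set (List ℕ)) (t : List ℕ) : Loc T t ⊆ T := fun _ h => h.1

lemma loc_laverS {T : Set (List ℕ)} {s t : List ℕ} (hT : LaverS T s) (ht : t ∈ T)
    (hst : s <+: t) : LaverS (Loc T t) t := by
  obtain ⟨h1, h2, h3, h4⟩ := hT
  refine ⟨?_, ⟨ht, Or.inl (List.prefix_refl _)⟩, fun u hu => hu.2, ?_⟩
  · rintro u ⟨huT, hu⟩ k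
    refine ⟨h1 u huT k, ?_⟩
    rcases hu with hu | hu
    · exact Or.inl ((List.take_prefix _ _).trans hu)
    · exact take_comparable hu k
  · rintro u ⟨huT, hu⟩ htu
    have : {n : ℕ | u ++ [n] ∈ T} ⊆ {n : ℕ | u ++ [n] ∈ Loc T t} := by
      intro n hn
      exact ⟨hn, Or.inr (htu.trans (List.prefix_append _ _))⟩
    exact Set.Infinite.mono this (h4 u huT (hst.trans htu))

/-- `t` is a good node of `R` for `A`: some Laver subtree of `R` with stem `t`
has body disjoint from `A`. -/
def Good (R : Set (List ℕ)) (A : Set (ℕ → ℕ)) (t : List ℕ) : Prop :=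
  ∃ S, S ⊆ R ∧ LaverS S t ∧ body S ∩ A = ∅

lemma prefix_antisymm {u t : List ℕ} (h1 : u <+: t) (h2 : t <+: u) : u = t :=
  h1.eq_of_length (le_antisymm h1.length_le h2.length_le)

lemma good_of_infinite_good_succ {R : Set (List ℕ)} (hR : IsTree R)
    (A : Set (ℕ → ℕ)) {t : List ℕ} (ht : t ∈ R)
    (hI : {n : ℕ | t ++ [n] ∈ R ∧ Good R A (t ++ [n])}.Infinite) : Good R A t := by
  classical
  set G := {n : ℕ | t ++ [n] ∈ R ∧ Good R A (t ++ [n])} with hG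
  have hch : ∀ n ∈ G, ∃ S, S ⊆ R ∧ LaverS S (t ++ [n]) ∧ body S ∩ A = ∅ := fun n hn => hn.2
  choose! Sf hSf1 hSf2 hSf3 using hch
  set S : Set (List ℕ) := {u | u <+: t} ∪ ⋃ n ∈ G, Sf n with hS
  have memS : ∀ u, u ∈ S ↔ (u <+: t ∨ ∃ n ∈ G, u ∈ Sf n) := by
    intro u; simp [hS, Set.mem_iUnion]
  -- any element of `Sf n` of length > t.length extends t ++ [n]
  have key : ∀ n ∈ G, ∀ u ∈ Sf n, t.length < u.length → (t ++ [n]) <+: u := by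
    intro n hn u hu hlen
    rcases (hSf2 n hn).2.2.1 u hu with h | h
    · have hle : u.length ≤ t.length + 1 := by
        have := h.length_le; simpa using this
      have : u = t ++ [n] := h.eq_of_length (by simp; omega)
      rw [this]
    · exact h
  refine ⟨S, ?_, ?_, ?_⟩
  · -- S ⊆ R
    intro u hu
    rcases (memS u).mp hu with h | ⟨n, hn, h⟩
    · have : u = t.take u.length := List.prefix_iff_eq_take.mp h
      rw [this]; exact hR t ht _
    · exact hSf1 n hn h
  · -- LaverS S t
    refine ⟨?_, ?_, ?_, ?_⟩
    · rintro u hu k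
      rcases (memS u).mp hu with h | ⟨n, hn, h⟩
      · exact (memS _).mpr (Or.inl ((List.take_prefix _ _).trans h))
      · exact (memS _).mpr (Or.inr ⟨n, hn, (hSf2 n hn).1 u h k⟩)
    · exact (memS t).mpr (Or.inl (List.prefix_refl _))
    · intro u hu
      rcases (memS u).mp hu with h | ⟨n, hn, h⟩
      · exact Or.inl h
      · rcases Nat.lt_or_ge t.length u.length with hl | hl
        · exact Or.inr ((List.prefix_append t [n]).trans (key n hn u h hl))
        · rcases (hSf2 n hn).2.2.1 u h with h' | h'
          · exact Or.inl (prefix_of_prefix_length_le h' hl)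
          · -- t ++ [n] <+: u but u too short: u = impossible unless lengths
            have := h'.length_le; simp at this; omega
    · intro u hu htu
      by_cases hut : u = t
      · subst hut
        have : G ⊆ {n : ℕ | u ++ [n] ∈ S} := by
          intro n hn
          exact (memS _).mpr (Or.inr ⟨n, hn, (hSf2 n hn).2.1⟩)
        exact hI.mono this
      · have hlen : t.length < u.length := by
          rcases Nat.lt_or_ge t.length u.length with h | h
          · exact h
          · exact absurd (prefix_antisymm (htu.eq_of_length (le_antisymm htu.length_le (by
              have := htu.length_le; omega)) ▸ List.prefix_refl u) htu) hut
        rcases (memS u).mp hu with h | ⟨n, hn, h⟩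
        · have := h.length_le; omega
        · have hstem : (t ++ [n]) <+: u := key n hn u h hlen
          have hsub : {m : ℕ | u ++ [m] ∈ Sf n} ⊆ {m : ℕ | u ++ [m] ∈ S} := by
            intro m hm; exact (memS _).mpr (Or.inr ⟨n, hn, hm⟩)
          exact ((hSf2 n hn).2.2.2 u h hstem).mono hsub
  · -- body S ∩ A = ∅
    rw [Set.eq_empty_iff_forall_notMem]
    rintro x ⟨hxb, hxA⟩
    have hu1 : seg x (t.length + 1) ∈ S := hxb (t.length + 1)
    have hnl : ¬ (seg x (t.length + 1) <+: t) := by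
      intro h; have := h.length_le; rw [seg_length] at this; omega
    rcases (memS _).mp hu1 with h | ⟨n, hn, h⟩
    · exact hnl h
    · have hu1eq : seg x (t.length + 1) = t ++ [n] := by
        have := key n hn _ h (by rw [seg_length]; omega)
        exact (this.eq_of_length (by simp [seg_length])).symm
      have hall : ∀ k, seg x k ∈ Sf n := by
        intro k
        rcases Nat.le_or_ge k (t.length + 1) with hk | hk
        · have : seg x k = (seg x (t.length + 1)).take k := (seg_take x hk).symm
          rw [this]; exact (hSf2 n hn).1 _ h k
        · have hsk : seg x k ∈ S := hxb k
          have hnl' : ¬ (seg x k <+: t) := by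
            intro h'; have := h'.length_le; rw [seg_length] at this; omega
          rcases (memS _).mp hsk with h' | ⟨m, hm, h'⟩
          · exact absurd h' hnl'
          · have hstem : (t ++ [m]) <+: seg x k := key m hm _ h' (by rw [seg_length]; omega)
            have : t ++ [m] = seg x (t.length + 1) := by
              have h1 := List.prefix_iff_eq_take.mp hstem
              rw [h1]; simp [seg_take x hk]
            rw [hu1eq] at this
            have : m = n := by simpa using List.append_cancel_left this
            rwa [this] at h'
      have : x ∈ body (Sf n) ∩ A := ⟨hall, hxA⟩
      rw [hSf3 n hn] at this
      exact this

lemma good_of_L0 {A : Set (ℕ → ℕ)} (hA : L0 A) {R : Set (List ℕ)} {s : List ℕ}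
    (hR : LaverS R s) : Good R A s := by
  by_contra hbad
  obtain ⟨h1, h2, h3, h4⟩ := hR
  set R' : Set (List ℕ) :=
    {u | u ∈ R ∧ (u <+: s ∨ (s <+: u ∧ ∀ w, s <+: w → w <+: u → ¬ Good R A w))} with hR'def
  have hR'sub : R' ⊆ R := fun u h => h.1
  have hbadall : ∀ u ∈ R', s <+: u → ∀ w, s <+: w → w <+: u → ¬ Good R A w := by
    rintro u ⟨huR, hcl⟩ hsu w hsw hwu
    rcases hcl with h | h
    · have hus : u = s := prefix_antisymm h hsu
      subst hus
      have : w = u := prefix_antisymm hwu hsw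
      subst this; exact hbad
    · exact h.2 w hsw hwu
  have hbadmem : ∀ u ∈ R', s <+: u → ¬ Good R A u := fun u hu hsu =>
    hbadall u hu hsu u hsu (List.prefix_refl _)
  have hR' : LaverS R' s := by
    refine ⟨?_, ?_, fun u hu => h3 u (hR'sub hu), ?_⟩
    · rintro u ⟨huR, hcl⟩ k
      refine ⟨h1 u huR k, ?_⟩
      rcases hcl with h | h
      · exact Or.inl ((List.take_prefix _ _).trans h)
      · rcases take_comparable h.1 k with h' | h'
        · exact Or.inl h'
        · exact Or.inr ⟨h', fun w hsw hwu =>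
            h.2 w hsw (hwu.trans (List.take_prefix _ _))⟩
    · refine ⟨h2, Or.inr ⟨List.prefix_refl _, fun w hsw hws => ?_⟩⟩
      have : w = s := prefix_antisymm hws hsw
      subst this; exact hbad
    · rintro u hu hsu
      have hfin : {n : ℕ | u ++ [n] ∈ R ∧ Good R A (u ++ [n])}.Finite := by
        rw [← Set.not_infinite]
        exact fun hinf => hbadmem u hu hsu (good_of_infinite_good_succ h1 A hu.1 hinf)
      have hsub : {n : ℕ | u ++ [n] ∈ R} \ {n | u ++ [n] ∈ R ∧ Good R A (u ++ [n])} ⊆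
          {n : ℕ | u ++ [n] ∈ R'} := by
        rintro n ⟨hnR, hn2⟩
        have hng : ¬ Good R A (u ++ [n]) := fun g => hn2 ⟨hnR, g⟩
        refine ⟨hnR, Or.inr ⟨hsu.trans (List.prefix_append _ _), fun w hsw hwu => ?_⟩⟩
        rcases Nat.lt_or_ge u.length w.length with hl | hl
        · have : w = u ++ [n] := by
            refine hwu.eq_of_length ?_
            have := hwu.length_le; simp at this ⊢; omega
          rw [this]; exact hng
        · exact hbadall u hu hsu w hsw (prefix_of_prefix_length_le hwu hl)
      exact ((h4 u hu.1 hsu).diff hfin).mono hsub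
  obtain ⟨Q, hQsub, hQL, hQA⟩ := hA R' (laverTree_iff.mpr ⟨s, hR'⟩)
  obtain ⟨w, hw⟩ := laverTree_iff.mp hQL
  have hwR' : w ∈ R' := hQsub hw.2.1
  have hsw : s <+: w := by
    by_contra hns
    have hws : w <+: s := (h3 w (hR'sub hwR')).resolve_right hns
    have hlt : w.length < s.length := by
      have := hws.length_le
      rcases Nat.lt_or_ge w.length s.length with h | h
      · exact h
      · exact absurd (hws.eq_of_length (by omega) ▸ List.prefix_refl w : s <+: w) hns
    have hsing : {n : ℕ | w ++ [n] ∈ Q}.Subsingleton := by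
      intro a ha b hb
      have key : ∀ c : ℕ, w ++ [c] ∈ Q → w ++ [c] = s.take (w.length + 1) := by
        intro c hc
        have hcomp := h3 _ (hR'sub (hQsub hc))
        have hpre : w ++ [c] <+: s := by
          rcases hcomp with h | h
          · exact h
          · have hle := h.length_le
            simp at hle
            have : s = w ++ [c] := h.eq_of_length (by simp; omega)
            rw [this]
        have := List.prefix_iff_eq_take.mp hpre
        simpa using this
      have := (key a ha).trans (key b hb).symm
      simpa using List.append_cancel_left this
    exact (hw.2.2.2 w hw.2.1 (List.prefix_refl _)) hsing.finite
  exact hbadmem w hwR' hsw ⟨Q, hQsub.trans hR'sub, hw, hQA⟩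

lemma child_step {A : Set (ℕ → ℕ)} (hA : L0 A) {R : Set (List ℕ)} {t : List ℕ}
    (hR : LaverS R t) {n : ℕ} (hn : t ++ [n] ∈ R) :
    ∃ S, S ⊆ R ∧ LaverS S (t ++ [n]) ∧ body S ∩ A = ∅ := by
  obtain ⟨S, h1, h2, h3⟩ := good_of_L0 hA (loc_laverS hR hn (List.prefix_append _ _))
  exact ⟨S, h1.trans (loc_subset _ _), h2, h3⟩

open scoped Classical in
/-- An injective choice of immediate successors at the top node of `p`. -/
noncomputable def succEmb (p : List ℕ × Set (List ℕ)) : ℕ → ℕ :=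
  if h : LaverS p.2 p.1 then
    fun i => (Set.Infinite.natEmbedding _ (h.2.2.2 p.1 h.2.1 (List.prefix_refl _)) i : ℕ)
  else id

lemma succEmb_inj (p : List ℕ × Set (List ℕ)) : Function.Injective (succEmb p) := by
  unfold succEmb
  split
  · intro i j hij
    exact (Set.Infinite.natEmbedding _ _).injective (Subtype.val_injective hij)
  · exact fun i j h => h

lemma succEmb_mem {p : List ℕ × Set (List ℕ)} (h : LaverS p.2 p.1) (i : ℕ) :
    p.1 ++ [succEmb p i] ∈ p.2 := by
  unfold succEmb
  rw [dif_pos h]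
  exact (Set.Infinite.natEmbedding _ (h.2.2.2 p.1 h.2.1 (List.prefix_refl _)) i).2

open scoped Classical in
/-- One fusion step: move to the `i`-th successor, inside a tree avoiding `A`. -/
noncomputable def pick (A : Set (ℕ → ℕ)) (p : List ℕ × Set (List ℕ)) (i : ℕ) :
    List ℕ × Set (List ℕ) :=
  (p.1 ++ [succEmb p i],
    if h : L0 A ∧ LaverS p.2 p.1 then
      Classical.choose (child_step h.1 h.2 (succEmb_mem h.2 i))
    else ∅)

lemma pick_fst (A : Set (ℕ → ℕ)) (p : List ℕ × Set (List ℕ)) (i : ℕ) :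
    (pick A p i).1 = p.1 ++ [succEmb p i] := rfl

lemma pick_spec {A : Set (ℕ → ℕ)} {p : List ℕ × Set (List ℕ)} (hA : L0 A)
    (hp : LaverS p.2 p.1) (i : ℕ) :
    (pick A p i).2 ⊆ p.2 ∧ LaverS (pick A p i).2 (pick A p i).1 ∧
      body (pick A p i).2 ∩ A = ∅ := by
  have h : L0 A ∧ LaverS p.2 p.1 := ⟨hA, hp⟩
  simp only [pick, dif_pos h]
  exact Classical.choose_spec (child_step h.1 h.2 (succEmb_mem h.2 i))

/-- The fusion system, indexed by (reversed) finite sequences of successor choices. -/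
noncomputable def Phi (f : ℕ → Set (ℕ → ℕ)) (p₀ : List ℕ × Set (List ℕ)) :
    List ℕ → List ℕ × Set (List ℕ)
  | [] => p₀
  | i :: ρ => pick (f (ρ.length + 1)) (Phi f p₀ ρ) i

section PhiLemmas

variable {f : ℕ → Set (ℕ → ℕ)} {p₀ : List ℕ × Set (List ℕ)}
variable (hf : ∀ n, L0 (f n)) (h₀ : LaverS p₀.2 p₀.1)

include hf h₀

lemma Phi_laverS : ∀ ρ, LaverS (Phi f p₀ ρ).2 (Phi f p₀ ρ).1 := by
  intro ρ
  induction ρ with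
  | nil => exact h₀
  | cons i ρ ih => exact (pick_spec (hf _) ih i).2.1

lemma Phi_cons_subset (i : ℕ) (ρ : List ℕ) : (Phi f p₀ (i :: ρ)).2 ⊆ (Phi f p₀ ρ).2 :=
  (pick_spec (hf _) (Phi_laverS hf h₀ ρ) i).1

lemma Phi_avoid_top (i : ℕ) (ρ : List ℕ) :
    body (Phi f p₀ (i :: ρ)).2 ∩ f (ρ.length + 1) = ∅ :=
  (pick_spec (hf _) (Phi_laverS hf h₀ ρ) i).2.2

lemma Phi_cons_fst (i : ℕ) (ρ : List ℕ) :
    (Phi f p₀ (i :: ρ)).1 = (Phi f p₀ ρ).1 ++ [succEmb (Phi f p₀ ρ) i] := rfl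

lemma Phi_len : ∀ ρ : List ℕ, (Phi f p₀ ρ).1.length = p₀.1.length + ρ.length := by
  intro ρ
  induction ρ with
  | nil => rfl
  | cons i ρ ih => rw [Phi_cons_fst hf h₀]; simp [ih]; omega

lemma Phi_stem_prefix : ∀ ρ : List ℕ, p₀.1 <+: (Phi f p₀ ρ).1 := by
  intro ρ
  induction ρ with
  | nil => exact List.prefix_refl _
  | cons i ρ ih => rw [Phi_cons_fst hf h₀]; exact ih.trans (List.prefix_append _ _)

lemma Phi_append_subset : ∀ (τ ρ : List ℕ), (Phi f p₀ (τ ++ ρ)).2 ⊆ (Phi f p₀ ρ).2 := by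
  intro τ ρ
  induction τ with
  | nil => exact fun u h => h
  | cons i τ ih => exact (Phi_cons_subset hf h₀ i (τ ++ ρ)).trans ih

lemma Phi_inj : ∀ ρ ρ' : List ℕ, (Phi f p₀ ρ).1 = (Phi f p₀ ρ').1 → ρ = ρ' := by
  intro ρ
  induction ρ with
  | nil =>
    intro ρ' h
    have := Phi_len hf h₀ ρ'
    rcases ρ' with _ | ⟨j, ρ'⟩
    · rfl
    · rw [← h, Phi_len hf h₀ []] at this; simp at this
  | cons i ρ ih =>
    intro ρ' h
    rcases ρ' with _ | ⟨j, ρ'⟩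
    · have := Phi_len hf h₀ (i :: ρ)
      rw [h, Phi_len hf h₀ []] at this; simp at this
    · rw [Phi_cons_fst hf h₀, Phi_cons_fst hf h₀] at h
      have hlen : (Phi f p₀ ρ).1.length = (Phi f p₀ ρ').1.length := by
        have h1 := Phi_len hf h₀ (i :: ρ)
        have h2 := Phi_len hf h₀ (j :: ρ')
        rw [Phi_cons_fst hf h₀] at h1 h2
        have := congrArg List.length h
        simp at this h1 h2 ⊢; omega
      obtain ⟨h1, h2⟩ := List.append_inj h hlen
      have hρ : ρ = ρ' := ih ρ' h1
      subst hρ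
      have : succEmb (Phi f p₀ ρ) i = succEmb (Phi f p₀ ρ) j := by simpa using h2
      rw [succEmb_inj _ this]

lemma Phi_avoid (h0A : body p₀.2 ∩ f 0 = ∅) :
    ∀ (ρ : List ℕ) (m : ℕ), m ≤ ρ.length → body (Phi f p₀ ρ).2 ∩ f m = ∅ := by
  intro ρ
  induction ρ with
  | nil =>
    intro m hm
    simp only [List.length_nil, Nat.le_zero] at hm
    subst hm; exact h0A
  | cons i ρ ih =>
    intro m hm
    rcases Nat.lt_or_ge m (ρ.length + 1) with h | h
    · have hsub : body (Phi f p₀ (i :: ρ)).2 ∩ f m ⊆ body (Phi f p₀ ρ).2 ∩ f m :=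
        fun x hx => ⟨fun n => Phi_cons_subset hf h₀ i ρ (hx.1 n), hx.2⟩
      rw [← Set.subset_empty_iff]
      rw [← ih m (by omega)]
      exact hsub
    · have : m = ρ.length + 1 := by simp at hm; omega
      subst this
      exact Phi_avoid_top hf h₀ i ρ

lemma Phi_mem : ∀ ρ : List ℕ, (Phi f p₀ ρ).1 ∈ (Phi f p₀ ρ).2 :=
  fun ρ => (Phi_laverS hf h₀ ρ).2.1

end PhiLemmas

lemma union_L0 (f : ℕ → Set (ℕ → ℕ)) (hf : ∀ n, L0 (f n)) : L0 (⋃ n, f n) := by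
  intro T hT
  obtain ⟨s, hTs⟩ := laverTree_iff.mp hT
  obtain ⟨S₀, hS₀T, hS₀L, hS₀A⟩ := good_of_L0 (hf 0) hTs
  set p₀ : List ℕ × Set (List ℕ) := (s, S₀) with hp₀
  have h₀ : LaverS p₀.2 p₀.1 := hS₀L
  have h0A : body p₀.2 ∩ f 0 = ∅ := hS₀A
  set Q : Set (List ℕ) := {u | u <+: s ∨ ∃ ρ, u = (Phi f p₀ ρ).1} with hQdef
  have hPhiT : ∀ ρ, (Phi f p₀ ρ).2 ⊆ T := by
    intro ρ
    have : (Phi f p₀ (ρ ++ [])).2 ⊆ (Phi f p₀ []).2 := Phi_append_subset hf h₀ ρ []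
    simp only [List.append_nil] at this
    exact this.trans hS₀T
  have hQT : Q ⊆ T := by
    rintro u (h | ⟨ρ, rfl⟩)
    · have : u = s.take u.length := List.prefix_iff_eq_take.mp h
      rw [this]; exact hTs.1 s hTs.2.1 _
    · exact hPhiT ρ (Phi_mem hf h₀ ρ)
  have htake : ∀ (ρ : List ℕ) (k : ℕ), (Phi f p₀ ρ).1.take k ∈ Q := by
    intro ρ
    induction ρ with
    | nil => exact fun k => Or.inl (List.take_prefix _ _)
    | cons i ρ ih =>
      intro k
      rw [Phi_cons_fst hf h₀]
      rcases le_or_gt k (Phi f p₀ ρ).1.length with hk | hk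
      · rw [List.take_append_of_le_length hk]; exact ih k
      · rw [List.take_of_length_le (by simp; omega)]
        exact Or.inr ⟨i :: ρ, rfl⟩
  have hQL : LaverS Q s := by
    refine ⟨?_, Or.inl (List.prefix_refl _), ?_, ?_⟩
    · rintro u (h | ⟨ρ, rfl⟩) k
      · exact Or.inl ((List.take_prefix _ _).trans h)
      · exact htake ρ k
    · rintro u (h | ⟨ρ, rfl⟩)
      · exact Or.inl h
      · exact Or.inr (Phi_stem_prefix hf h₀ ρ)
    · rintro u hu hsu
      have hrep : ∃ ρ, u = (Phi f p₀ ρ).1 := by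
        rcases hu with h | h
        · exact ⟨[], prefix_antisymm h hsu⟩
        · exact h
      obtain ⟨ρ, rfl⟩ := hrep
      have hc : ∀ i : ℕ, (Phi f p₀ ρ).1 ++ [succEmb (Phi f p₀ ρ) i] ∈ Q := by
        intro i
        exact Or.inr ⟨i :: ρ, (Phi_cons_fst hf h₀ i ρ)⟩
      exact Set.infinite_of_injective_forall_mem (succEmb_inj (Phi f p₀ ρ)) hc
  have hbody : body Q ∩ (⋃ n, f n) = ∅ := by
    rw [Set.eq_empty_iff_forall_notMem]
    rintro x ⟨hxb, hxU⟩
    rw [Set.mem_iUnion] at hxU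
    obtain ⟨m, hxm⟩ := hxU
    set L := s.length with hL
    have hPlen : ∀ ρ : List ℕ, (Phi f p₀ ρ).1.length = L + ρ.length := fun ρ => by
      rw [Phi_len hf h₀]
    -- representation of initial segments
    have hseg : ∀ k, seg x k ∈ Q := hxb
    have hrep : ∀ k, ∃ ρ : List ℕ, seg x (L + k) = (Phi f p₀ ρ).1 ∧ ρ.length = k := by
      intro k
      rcases hseg (L + k) with h | ⟨ρ, hρ⟩
      · have hlen := h.length_le
        rw [seg_length] at hlen
        have hk : k = 0 := by omega
        subst hk
        exact ⟨[], h.eq_of_length (by simp [seg_length, hPlen, hL]), rfl⟩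
      · refine ⟨ρ, hρ, ?_⟩
        have := hPlen ρ
        rw [← hρ, seg_length] at this
        omega
    -- step lemma
    have hstep : ∀ ρ : List ℕ, (Phi f p₀ ρ).1 = seg x (L + ρ.length) →
        ∃ i, (Phi f p₀ (i :: ρ)).1 = seg x (L + ρ.length + 1) := by
      intro ρ hρ
      obtain ⟨τ, hτ, hτlen⟩ := hrep (ρ.length + 1)
      rcases τ with _ | ⟨j, τ'⟩
      · simp at hτlen
      · have hτ'len : τ'.length = ρ.length := by simpa using hτlen
        have htail : (Phi f p₀ τ').1 = seg x (L + ρ.length) := by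
          have hlen1 : L + ρ.length = (Phi f p₀ τ').1.length := by rw [hPlen τ', hτ'len]
          have h1 : (Phi f p₀ (j :: τ')).1.take (L + ρ.length) = (Phi f p₀ τ').1 := by
            rw [Phi_cons_fst hf h₀]
            exact (List.take_append_of_le_length (le_of_eq hlen1)).trans
              (List.take_of_length_le (le_of_eq hlen1.symm))
          have hle : L + ρ.length ≤ L + (ρ.length + 1) := by omega
          rw [← h1, ← hτ, seg_take x hle]
        have hρτ : τ' = ρ := Phi_inj hf h₀ τ' ρ (htail.trans hρ.symm)
        rw [hρτ] at hτ
        exact ⟨j, by rw [show L + ρ.length + 1 = L + (ρ.length + 1) from by omega, ← hτ]⟩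
    -- chain lemma
    have hchain : ∀ (d : ℕ) (ρ : List ℕ), (Phi f p₀ ρ).1 = seg x (L + ρ.length) →
        ∃ τ : List ℕ, τ.length = d ∧ (Phi f p₀ (τ ++ ρ)).1 = seg x (L + ρ.length + d) := by
      intro d
      induction d with
      | zero => exact fun ρ hρ => ⟨[], rfl, by simpa using hρ⟩
      | succ d ih =>
        intro ρ hρ
        obtain ⟨τ, hτlen, hτ⟩ := ih ρ hρ
        have hτ' : (Phi f p₀ (τ ++ ρ)).1 = seg x (L + (τ ++ ρ).length) := by
          rw [hτ]; congr 1; rw [List.length_append]; omega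
        obtain ⟨i, hi⟩ := hstep (τ ++ ρ) hτ'
        refine ⟨i :: τ, by simp [hτlen], ?_⟩
        rw [List.cons_append, hi,
          show L + (τ ++ ρ).length + 1 = L + ρ.length + (d + 1) from by
            rw [List.length_append]; omega]
    -- base
    have hbase : (Phi f p₀ ([] : List ℕ)).1 = seg x (L + ([] : List ℕ).length) := by
      obtain ⟨ρ, hρ, hρlen⟩ := hrep 0
      have : ρ = [] := List.length_eq_zero_iff.mp hρlen
      subst this
      simpa using hρ.symm
    obtain ⟨ρm, hρmlen, hρm⟩ := hchain m [] hbase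
    rw [List.append_nil] at hρm
    have hρm' : (Phi f p₀ ρm).1 = seg x (L + m) := by rw [hρm]; congr 1
    -- x ∈ body of the tree at ρm
    have hxbody : x ∈ body (Phi f p₀ ρm).2 := by
      intro k
      rcases le_or_gt k (L + m) with hk | hk
      · have : seg x k = (Phi f p₀ ρm).1.take k := by
          rw [hρm', seg_take x hk]
        rw [show List.ofFn (fun i : Fin k => x i) = seg x k from rfl, this]
        exact (Phi_laverS hf h₀ ρm).1 _ (Phi_mem hf h₀ ρm) k
      · have hρmseg : (Phi f p₀ ρm).1 = seg x (L + ρm.length) := by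
          rw [hρm', hρmlen]
        obtain ⟨τ, hτlen, hτ⟩ := hchain (k - (L + m)) ρm hρmseg
        have hτ' : (Phi f p₀ (τ ++ ρm)).1 = seg x k := by
          rw [hτ]
          congr 1
          omega
        rw [show List.ofFn (fun i : Fin k => x i) = seg x k from rfl, ← hτ']
        exact Phi_append_subset hf h₀ τ ρm (Phi_mem hf h₀ (τ ++ ρm))
    have : x ∈ body (Phi f p₀ ρm).2 ∩ f m := ⟨hxbody, hxm⟩
    rw [Phi_avoid hf h₀ h0A ρm m (by omega)] at this
    exact this
  exact ⟨Q, hQT, laverTree_iff.mpr ⟨s, hQL⟩, hbody⟩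


/-- The `(l⁰)`-sets form a σ-ideal on Baire space: they are closed under subsets and
under countable unions. -/
theorem l0_sigma_ideal :
    (∀ A B : Set (ℕ → ℕ), A ⊆ B → L0 B → L0 A) ∧
    (∀ f : ℕ → Set (ℕ → ℕ), (∀ n, L0 (f n)) → L0 (⋃ n, f n)) := by
  constructor
  · intro A B hAB hB T hT
    obtain ⟨Q, h1, h2, h3⟩ := hB T hT
    refine ⟨Q, h1, h2, ?_⟩
    rw [Set.eq_empty_iff_forall_notMem]
    rintro x ⟨hx1, hx2⟩
    have : x ∈ body Q ∩ B := ⟨hx1, hAB hx2⟩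
    rw [h3] at this
    exact this
  · exact union_L0
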